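/- Limit of the normalized information matrix and its nonsingularity (proof of Theorem 7.1): Let (z_i, δ_i)_{i≥1} be a sequence of covariate profiles and treatment indicators such that for every stratum s ∈ S, N_n(s)/n → p(s) with p(s) > 0 and Ñ_n(s)/N_n(s) → π*(s) with π*(s) ∈ (0,1), where N_n(s) and Ñ_n(s) are computed from the first n patients. Define g_A(s) = (1, 0, f(s)ᵗ, 0_pᵗ)ᵗ and g_B(s) = (0, 1, 0_pᵗ, f(s)ᵗ)ᵗ in ℝ^{2+2p}. Then (1/n)·X_nᵗX_n converges, as n → ∞, to the matrix M(π*) = Σ_{s∈S} p(s)·[π*(s)·g_A(s)g_A(s)ᵗ + (1−π*(s))·g_B(s)g_B(s)ᵗ], and M(π*) is positive definite (in particular nonsingular). -/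

import Mathlib

open Matrix Finset Filter

noncomputable section

/-- The set of strata `{0,…,J} × {0,…,L}`. -/
abbrev Stratum (J L : ℕ) := Fin (J + 1) × Fin (L + 1)

/-- Index type for the `p = J + L + J·L` dummy/interaction coordinates. -/
abbrev Idx (J L : ℕ) := Fin J ⊕ Fin L ⊕ (Fin J × Fin L)

/-- Full dummy coding of a stratum, with all interactions. -/
def dummy (J L : ℕ) (s : Stratum J L) : Idx J L → ℝ := fun k =>
  match k with
  | Sum.inl j' => if (s.1 : ℕ) = (j' : ℕ) + 1 then 1 else 0
  | Sum.inr (Sum.inl l') => if (s.2 : ℕ) = (l' : ℕ) + 1 then 1 else 0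
  | Sum.inr (Sum.inr q) =>
      if (s.1 : ℕ) = (q.1 : ℕ) + 1 ∧ (s.2 : ℕ) = (q.2 : ℕ) + 1 then 1 else 0

/-- Column index type of the design matrix: dimension `2 + 2p`. -/
abbrev Cols (J L : ℕ) := Fin 2 ⊕ (Idx J L ⊕ Idx J L)

/-- The design matrix `X_n` of the first `n` patients. -/
def designX (J L n : ℕ) (z : ℕ → Stratum J L) (δ : ℕ → Bool) :
    Matrix (Fin n) (Cols J L) ℝ :=
  Matrix.of fun i c =>
    match c with
    | Sum.inl a => if a = 0 then (if δ i then (1 : ℝ) else 0) else (if δ i then 0 else 1)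
    | Sum.inr (Sum.inl k) => if δ i then dummy J L (z i) k else 0
    | Sum.inr (Sum.inr k) => if δ i then 0 else dummy J L (z i) k

/-- `N_n(j,l)`: the size of stratum `(j,l)` among the first `n` patients. -/
def strN (J L n : ℕ) (z : ℕ → Stratum J L) (s : Stratum J L) : ℕ :=
  ((Finset.range n).filter fun i => z i = s).card

/-- `Ñ_n(j,l)`: the number of the first `n` patients of stratum `(j,l)` assigned to `A`. -/
def strNA (J L n : ℕ) (z : ℕ → Stratum J L) (δ : ℕ → Bool) (s : Stratum J L) : ℕ :=
  ((Finset.range n).filter fun i => z i = s ∧ δ i = true).card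

/-- `g_A(s) = (1, 0, f(s)ᵗ, 0ᵗ)ᵗ`. -/
def gA (J L : ℕ) (s : Stratum J L) : Cols J L → ℝ := fun c =>
  match c with
  | Sum.inl a => if a = 0 then 1 else 0
  | Sum.inr (Sum.inl k) => dummy J L s k
  | Sum.inr (Sum.inr _) => 0

/-- `g_B(s) = (0, 1, 0ᵗ, f(s)ᵗ)ᵗ`. -/
def gB (J L : ℕ) (s : Stratum J L) : Cols J L → ℝ := fun c =>
  match c with
  | Sum.inl a => if a = 0 then 0 else 1
  | Sum.inr (Sum.inl _) => 0
  | Sum.inr (Sum.inr k) => dummy J L s k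

/-- The limiting information matrix
`M(π*) = Σ_s p(s)·[π*(s)·g_A(s)g_A(s)ᵗ + (1−π*(s))·g_B(s)g_B(s)ᵗ]`. -/
def infoM (J L : ℕ) (p πs : Stratum J L → ℝ) : Matrix (Cols J L) (Cols J L) ℝ :=
  ∑ s : Stratum J L,
    p s • (πs s • Matrix.vecMulVec (gA J L s) (gA J L s) +
      (1 - πs s) • Matrix.vecMulVec (gB J L s) (gB J L s))

/-! Auxiliary lemmas -/

lemma sum_dummy_eval (J L : ℕ) (s : Stratum J L) (v : Idx J L → ℝ) :
    ∑ k, dummy J L s k * v k =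
      (∑ j : Fin J, if (s.1 : ℕ) = (j : ℕ) + 1 then v (Sum.inl j) else 0)
      + (∑ l : Fin L, if (s.2 : ℕ) = (l : ℕ) + 1 then v (Sum.inr (Sum.inl l)) else 0)
      + ∑ q : Fin J × Fin L,
          if (s.1 : ℕ) = (q.1 : ℕ) + 1 ∧ (s.2 : ℕ) = (q.2 : ℕ) + 1 then
            v (Sum.inr (Sum.inr q)) else 0 := by
  rw [Fintype.sum_sum_type, Fintype.sum_sum_type, ← add_assoc]
  simp [dummy, ite_mul]

lemma dummy_zero (J L : ℕ) (x0 : ℝ) (v : Idx J L → ℝ)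
    (h : ∀ s : Stratum J L, x0 + ∑ k, dummy J L s k * v k = 0) :
    x0 = 0 ∧ ∀ k, v k = 0 := by
  have h00 := h (0, 0)
  rw [sum_dummy_eval] at h00
  simp at h00
  refine ⟨h00, ?_⟩
  have hJ0 : ∀ j : Fin J, v (Sum.inl j) = 0 := by
    intro j
    have := h (j.succ, 0)
    rw [sum_dummy_eval] at this
    simpa [h00, Fin.val_succ, Fin.val_inj, Finset.sum_ite_eq] using this
  have hL0 : ∀ l : Fin L, v (Sum.inr (Sum.inl l)) = 0 := by
    intro l
    have := h (0, l.succ)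
    rw [sum_dummy_eval] at this
    simpa [h00, Fin.val_succ, Fin.val_inj, Finset.sum_ite_eq] using this
  rintro (j | l | ⟨j, l⟩)
  · exact hJ0 j
  · exact hL0 l
  · have := h (j.succ, l.succ)
    rw [sum_dummy_eval] at this
    have hq : ∀ q : Fin J × Fin L,
        (((j.succ : Fin (J+1)) : ℕ) = (q.1 : ℕ) + 1 ∧
          ((l.succ : Fin (L+1)) : ℕ) = (q.2 : ℕ) + 1) ↔ (j, l) = q := by
      intro q
      simp [Fin.val_succ, Fin.val_inj, Prod.ext_iff]
    simp only [hq] at this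
    simpa [h00, hJ0, hL0, Fin.val_succ, Fin.val_inj, Finset.sum_ite_eq] using this

lemma gA_dot (J L : ℕ) (s : Stratum J L) (x : Cols J L → ℝ) :
    gA J L s ⬝ᵥ x = x (Sum.inl 0) + ∑ k, dummy J L s k * x (Sum.inr (Sum.inl k)) := by
  simp [dotProduct, Fintype.sum_sum_type, Fin.sum_univ_two, gA]

lemma gB_dot (J L : ℕ) (s : Stratum J L) (x : Cols J L → ℝ) :
    gB J L s ⬝ᵥ x = x (Sum.inl 1) + ∑ k, dummy J L s k * x (Sum.inr (Sum.inr k)) := by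
  simp [dotProduct, Fintype.sum_sum_type, Fin.sum_univ_two, gB]

lemma vecMulVec_mulVec' {n : Type*} [Fintype n] (u v x : n → ℝ) :
    Matrix.vecMulVec u v *ᵥ x = (v ⬝ᵥ x) • u := by
  ext i
  show ∑ j, u i * v j * x j = (∑ j, v j * x j) * u i
  rw [Finset.sum_mul]
  exact Finset.sum_congr rfl fun j _ => by ring

lemma sum_mulVec'' {ι n m : Type*} [Fintype n] (t : Finset ι) (M : ι → Matrix m n ℝ)
    (x : n → ℝ) : (∑ s ∈ t, M s) *ᵥ x = ∑ s ∈ t, M s *ᵥ x := by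
  ext i
  simp only [Matrix.mulVec, dotProduct, Matrix.sum_apply, Finset.sum_apply,
    Finset.sum_mul]
  exact Finset.sum_comm

lemma dotProduct_sum'' {ι n : Type*} [Fintype n] (t : Finset ι) (x : n → ℝ)
    (v : ι → n → ℝ) : x ⬝ᵥ (∑ s ∈ t, v s) = ∑ s ∈ t, x ⬝ᵥ v s := by
  simp only [dotProduct, Finset.sum_apply, Finset.mul_sum]
  exact Finset.sum_comm

lemma infoM_quad (J L : ℕ) (p πs : Stratum J L → ℝ) (x : Cols J L → ℝ) :
    x ⬝ᵥ (infoM J L p πs *ᵥ x) =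
      ∑ s : Stratum J L,
        p s * (πs s * (gA J L s ⬝ᵥ x) ^ 2 + (1 - πs s) * (gB J L s ⬝ᵥ x) ^ 2) := by
  rw [infoM, sum_mulVec'', dotProduct_sum'']
  refine Finset.sum_congr rfl fun s _ => ?_
  rw [Matrix.smul_mulVec, Matrix.add_mulVec, Matrix.smul_mulVec,
    Matrix.smul_mulVec, vecMulVec_mulVec', vecMulVec_mulVec']
  simp [dotProduct_smul, dotProduct_add, smul_eq_mul]
  rw [dotProduct_comm x (gA J L s), dotProduct_comm x (gB J L s)]
  ring

/-- Limit of the normalized information matrix and its nonsingularity (proof of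
Theorem 7.1): if `N_n(s)/n → p(s) > 0` and `Ñ_n(s)/N_n(s) → π*(s) ∈ (0,1)` for every
stratum `s`, then `(1/n)·X_nᵗX_n → M(π*)`, and `M(π*)` is positive definite. -/
theorem info_matrix_limit (J L : ℕ) (hJ : 1 ≤ J) (hL : 1 ≤ L)
    (z : ℕ → Stratum J L) (δ : ℕ → Bool) (p πs : Stratum J L → ℝ)
    (hp : ∀ s, 0 < p s) (hπ : ∀ s, πs s ∈ Set.Ioo (0 : ℝ) 1)
    (hN : ∀ s, Tendsto (fun n : ℕ => (strN J L n z s : ℝ) / n) atTop (nhds (p s)))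
    (hNA : ∀ s, Tendsto (fun n : ℕ => (strNA J L n z δ s : ℝ) / (strN J L n z s : ℝ))
      atTop (nhds (πs s))) :
    Tendsto (fun n : ℕ => (n : ℝ)⁻¹ • ((designX J L n z δ)ᵀ * designX J L n z δ))
        atTop (nhds (infoM J L p πs)) ∧
      (infoM J L p πs).PosDef := by
    classical
  set GA : Stratum J L → Matrix (Cols J L) (Cols J L) ℝ :=
    fun s => Matrix.vecMulVec (gA J L s) (gA J L s) with hGA
  set GB : Stratum J L → Matrix (Cols J L) (Cols J L) ℝ :=
    fun s => Matrix.vecMulVec (gB J L s) (gB J L s) with hGB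
  set NB : ℕ → Stratum J L → ℕ :=
    fun n s => ((Finset.range n).filter fun i => z i = s ∧ δ i = false).card with hNBdef
  -- structure of the rows of `designX`
  have hrow : ∀ n (i : Fin n) (c : Cols J L),
      designX J L n z δ i c = (if δ (i : ℕ) then gA J L (z i) else gB J L (z i)) c := by
    rintro n i (a | k | k) <;> rcases hd : δ (i : ℕ) <;>
      simp [designX, gA, gB, hd] <;> fin_cases a <;> simp
  -- counting identities
  have hcard : ∀ n s, strNA J L n z δ s + NB n s = strN J L n z s := by
    intro n s
    have := Finset.card_filter_add_card_filter_not
      (s := (Finset.range n).filter fun i => z i = s) (p := fun i => δ i = true)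
    rw [Finset.filter_filter, Finset.filter_filter] at this
    simpa [strNA, strN, Bool.not_eq_true] using this
  have hle : ∀ n s, strNA J L n z δ s ≤ strN J L n z s := fun n s => by
    rw [← hcard n s]; exact Nat.le_add_right _ _
  -- decomposition of the information matrix of the first n patients
  have hX : ∀ n, (designX J L n z δ)ᵀ * designX J L n z δ =
      ∑ s : Stratum J L, ((strNA J L n z δ s : ℝ) • GA s + (NB n s : ℝ) • GB s) := by
    intro n
    have h1 : (designX J L n z δ)ᵀ * designX J L n z δ =
        ∑ i ∈ Finset.range n,
          Matrix.vecMulVec (if δ i then gA J L (z i) else gB J L (z i))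
            (if δ i then gA J L (z i) else gB J L (z i)) := by
      ext c c'
      rw [Matrix.mul_apply]
      simp only [Matrix.transpose_apply, hrow, Matrix.sum_apply, Matrix.vecMulVec_apply]
      exact Fin.sum_univ_eq_sum_range
        (fun i => (if δ i then gA J L (z i) else gB J L (z i)) c *
          (if δ i then gA J L (z i) else gB J L (z i)) c') n
    rw [h1]
    have h2 : (Finset.range n) =
        (Finset.range n).filter (fun i => z i ∈ (Finset.univ : Finset (Stratum J L))) := by
      simp
    rw [h2, ← Finset.sum_fiberwise_eq_sum_filter (Finset.range n) Finset.univ z]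
    refine Finset.sum_congr rfl fun s _ => ?_
    rw [← Finset.sum_filter_add_sum_filter_not
      ((Finset.range n).filter fun i => z i = s) (fun i => δ i = true)]
    rw [Finset.filter_filter, Finset.filter_filter]
    have e1 : ∑ i ∈ (Finset.range n).filter (fun i => z i = s ∧ δ i = true),
        Matrix.vecMulVec (if δ i then gA J L (z i) else gB J L (z i))
          (if δ i then gA J L (z i) else gB J L (z i)) = (strNA J L n z δ s : ℝ) • GA s := by
      rw [Finset.sum_congr rfl (g := fun _ => GA s) (fun i hi => by
        simp only [Finset.mem_filter] at hi
        simp [hi.2.1, hi.2.2, hGA]), Finset.sum_const, strNA]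
      rw [Nat.cast_smul_eq_nsmul]
    have e2 : ∑ i ∈ (Finset.range n).filter (fun i => z i = s ∧ ¬ δ i = true),
        Matrix.vecMulVec (if δ i then gA J L (z i) else gB J L (z i))
          (if δ i then gA J L (z i) else gB J L (z i)) = (NB n s : ℝ) • GB s := by
      rw [Finset.sum_congr rfl (g := fun _ => GB s) (fun i hi => by
        simp only [Finset.mem_filter, Bool.not_eq_true] at hi
        simp [hi.2.1, hi.2.2, hGB]), Finset.sum_const, hNBdef]
      rw [Nat.cast_smul_eq_nsmul]
      simp [Bool.not_eq_true]
    rw [e1, e2]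
  -- scalar limits
  have hA_lim : ∀ s, Tendsto (fun n : ℕ => (strNA J L n z δ s : ℝ) / n) atTop
      (nhds (p s * πs s)) := by
    intro s
    have heq : ∀ n : ℕ, (strNA J L n z δ s : ℝ) / n =
        ((strNA J L n z δ s : ℝ) / (strN J L n z s : ℝ)) * ((strN J L n z s : ℝ) / n) := by
      intro n
      rcases eq_or_ne (strN J L n z s) 0 with h | h
      · have h2 : strNA J L n z δ s = 0 := Nat.le_zero.mp (h ▸ hle n s)
        simp [h, h2]
      · field_simp
      
    have := ((hNA s).mul (hN s))
    rw [mul_comm] at this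
    exact this.congr fun n => (heq n).symm
  have hB_lim : ∀ s, Tendsto (fun n : ℕ => (NB n s : ℝ) / n) atTop
      (nhds (p s * (1 - πs s))) := by
    intro s
    have heq : ∀ n : ℕ, (NB n s : ℝ) / n =
        (strN J L n z s : ℝ) / n - (strNA J L n z δ s : ℝ) / n := by
      intro n
      rw [← sub_div]
      congr 1
      have := hcard n s
      have : (strNA J L n z δ s : ℝ) + (NB n s : ℝ) = (strN J L n z s : ℝ) := by
        exact_mod_cast congrArg (Nat.cast : ℕ → ℝ) this
      linarith
    have h2 : p s * (1 - πs s) = p s - p s * πs s := by ring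
    rw [h2]
    exact ((hN s).sub (hA_lim s)).congr fun n => (heq n).symm
  -- rewrite limit matrix
  have hM : infoM J L p πs =
      ∑ s : Stratum J L, ((p s * πs s) • GA s + (p s * (1 - πs s)) • GB s) := by
    unfold infoM
    exact Finset.sum_congr rfl fun s _ => by rw [smul_add, smul_smul, smul_smul]
  constructor
  · -- convergence
    have key : ∀ n : ℕ, (n : ℝ)⁻¹ • ((designX J L n z δ)ᵀ * designX J L n z δ) =
        ∑ s : Stratum J L, (((strNA J L n z δ s : ℝ) / n) • GA s + ((NB n s : ℝ) / n) • GB s) := by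
      intro n
      rw [hX n, Finset.smul_sum]
      refine Finset.sum_congr rfl fun s _ => ?_
      rw [smul_add, smul_smul, smul_smul, inv_mul_eq_div, inv_mul_eq_div]
    refine Tendsto.congr (fun n => (key n).symm) ?_
    rw [hM]
    exact tendsto_finset_sum _ fun s _ =>
      ((hA_lim s).smul_const (GA s)).add ((hB_lim s).smul_const (GB s))
  · -- positive definiteness
    rw [Matrix.posDef_iff_dotProduct_mulVec]
    constructor
    · show (infoM J L p πs)ᴴ = infoM J L p πs
      ext c c'
      simp only [infoM, Matrix.conjTranspose_apply, Matrix.sum_apply, Matrix.add_apply,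
        Matrix.smul_apply, Matrix.vecMulVec_apply, star_trivial, smul_eq_mul]
      exact Finset.sum_congr rfl fun s _ => by ring
    · intro x hx
      have hsx : star x = x := star_trivial x
      rw [hsx, infoM_quad]
      -- there is a stratum where one of the dot products is nonzero
      have key : ∃ s : Stratum J L, gA J L s ⬝ᵥ x ≠ 0 ∨ gB J L s ⬝ᵥ x ≠ 0 := by
        by_contra hall
        push_neg at hall
        apply hx
        have hAz := dummy_zero J L (x (Sum.inl 0)) (fun k => x (Sum.inr (Sum.inl k)))
          (fun s => by rw [← gA_dot]; exact (hall s).1)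
        have hBz := dummy_zero J L (x (Sum.inl 1)) (fun k => x (Sum.inr (Sum.inr k)))
          (fun s => by rw [← gB_dot]; exact (hall s).2)
        funext c
        rcases c with a | k | k
        · fin_cases a
          · exact hAz.1
          · exact hBz.1
        · exact hAz.2 k
        · exact hBz.2 k
      obtain ⟨s0, hs0⟩ := key
      refine Finset.sum_pos' (fun s _ => ?_) ⟨s0, Finset.mem_univ s0, ?_⟩
      · exact mul_nonneg (hp s).le (add_nonneg
          (mul_nonneg (hπ s).1.le (sq_nonneg _))
          (mul_nonneg (by linarith [(hπ s).2]) (sq_nonneg _)))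
      · have h1 : (0:ℝ) < πs s0 := (hπ s0).1
        have h2 : (0:ℝ) < 1 - πs s0 := by linarith [(hπ s0).2]
        rcases hs0 with h | h
        · have hsq : 0 < (gA J L s0 ⬝ᵥ x) ^ 2 := by positivity
          have := mul_nonneg h2.le (sq_nonneg (gB J L s0 ⬝ᵥ x))
          nlinarith [hp s0, mul_pos h1 hsq]
        · have hsq : 0 < (gB J L s0 ⬝ᵥ x) ^ 2 := by positivity
          have := mul_nonneg h1.le (sq_nonneg (gA J L s0 ⬝ᵥ x))
          nlinarith [hp s0, mul_pos h2 hsq]
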